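/- There exist nonzero real skew-symmetric $3 \times 3$ matrices $A$ and $B$ with $\|AB - BA\|_F = \tfrac{1}{\sqrt{2}} \|A\|_F \, \|B\|_F$; for instance $A = E_{12} - E_{21}$ and $B = E_{13} - E_{31}$ (where $E_{ij}$ is the matrix with a single $1$ in entry $(i,j)$) satisfy this equality. Hence the constant $\tfrac{1}{\sqrt{2}}$ is sharp, i.e. $\gamma_0(\mathfrak{so}(3)) = 1$ in the normalization $\langle M,N\rangle = -\tfrac12\operatorname{tr}(MN)$. -/

import Mathlib

open Matrix

/-- Frobenius norm of a real square matrix. -/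
noncomputable def frobNorm {n : ℕ} (M : Matrix (Fin n) (Fin n) ℝ) : ℝ :=
  Real.sqrt (Matrix.trace (Mᵀ * M))

/-- Sharpness of the `𝔰𝔬(3)` Bourguignon–Lawson commutator estimate:
`A = E₁₂ - E₂₁` and `B = E₁₃ - E₃₁` are nonzero skew-symmetric matrices
achieving `‖AB - BA‖_F = (1/√2) ‖A‖_F ‖B‖_F`, so `γ₀(𝔰𝔬(3)) = 1`. -/
theorem so3_commutator_frobenius_sharp :
    ∃ A B : Matrix (Fin 3) (Fin 3) ℝ,
      A ≠ 0 ∧ B ≠ 0 ∧ Aᵀ = -A ∧ Bᵀ = -B ∧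
      A = !![0, 1, 0; -1, 0, 0; 0, 0, 0] ∧
      B = !![0, 0, 1; 0, 0, 0; -1, 0, 0] ∧
      frobNorm (A * B - B * A) = (1 / Real.sqrt 2) * (frobNorm A * frobNorm B) := by
  refine ⟨!![0, 1, 0; -1, 0, 0; 0, 0, 0], !![0, 0, 1; 0, 0, 0; -1, 0, 0],
    ?_, ?_, ?_, ?_, rfl, rfl, ?_⟩
  · intro h
    have := congrFun (congrFun h 0) 1
    simp at this
  · intro h
    have := congrFun (congrFun h 0) 2
    simp at this
  · ext i j; fin_cases i <;> fin_cases j <;> simp [Matrix.transpose, Matrix.vecHead, Matrix.vecTail]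
  · ext i j; fin_cases i <;> fin_cases j <;> simp [Matrix.transpose, Matrix.vecHead, Matrix.vecTail]
  · have h1 : (!![0, 1, 0; -1, 0, 0; 0, 0, 0] : Matrix (Fin 3) (Fin 3) ℝ) *
        !![0, 0, 1; 0, 0, 0; -1, 0, 0] -
        !![0, 0, 1; 0, 0, 0; -1, 0, 0] * !![0, 1, 0; -1, 0, 0; 0, 0, 0] =
        !![0, 0, 0; 0, 0, -1; 0, 1, 0] := by
      ext i j; fin_cases i <;> fin_cases j <;>
        norm_num [Matrix.mul_apply, Fin.sum_univ_succ, Matrix.vecHead, Matrix.vecTail] <;> rfl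
    rw [h1]
    have t1 : Matrix.trace ((!![0, 0, 0; 0, 0, -1; 0, 1, 0] : Matrix (Fin 3) (Fin 3) ℝ)ᵀ *
        !![0, 0, 0; 0, 0, -1; 0, 1, 0]) = 2 := by
      norm_num [Matrix.trace, Matrix.mul_apply, Fin.sum_univ_succ, Matrix.diag, Matrix.vecHead, Matrix.vecTail]
    have t2 : Matrix.trace ((!![0, 1, 0; -1, 0, 0; 0, 0, 0] : Matrix (Fin 3) (Fin 3) ℝ)ᵀ *
        !![0, 1, 0; -1, 0, 0; 0, 0, 0]) = 2 := by
      norm_num [Matrix.trace, Matrix.mul_apply, Fin.sum_univ_succ, Matrix.diag, Matrix.vecHead, Matrix.vecTail]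
    have t3 : Matrix.trace ((!![0, 0, 1; 0, 0, 0; -1, 0, 0] : Matrix (Fin 3) (Fin 3) ℝ)ᵀ *
        !![0, 0, 1; 0, 0, 0; -1, 0, 0]) = 2 := by
      norm_num [Matrix.trace, Matrix.mul_apply, Fin.sum_univ_succ, Matrix.diag, Matrix.vecHead, Matrix.vecTail]
    rw [frobNorm, frobNorm, frobNorm, t1, t2, t3]
    have h2 : Real.sqrt 2 > 0 := Real.sqrt_pos.mpr (by norm_num)
    have h3 : Real.sqrt 2 * Real.sqrt 2 = 2 := Real.mul_self_sqrt (by norm_num)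
    field_simp
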